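/- For every strategy profile s of the 0,1-game (i.e., with S0(s) or S1(s)), SBcAes(s) implies that s is a subgame perfect equilibrium, SPE(s). -/

import Mathlib

/-- The two agents of the game. -/
inductive Agent : Type
  | A
  | B

/-- The two choices: down and right. -/
inductive Choice : Type
  | d
  | r

/-- Payoff assignments for the agents. -/
abbrev Payoffs : Type := Agent → ℝ

/-! ### Strategy profiles: final coalgebra of `X ↦ ℝ^P + P × Choice × X × X` -/

def StratProfF : PFunctor.{0} :=
  ⟨Payoffs ⊕ (Agent × Choice), fun x =>
    match x with
    | Sum.inl _ => Empty
    | Sum.inr _ => Bool⟩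

/-- Strategy profiles: the final coalgebra (M-type) of `StratProfF`. -/
abbrev StratProf : Type := StratProfF.M

/-- Leaf strategy profile `⟨⟨f⟩⟩`. -/
def sleaf (f : Payoffs) : StratProf :=
  PFunctor.M.mk ⟨Sum.inl f, fun (e : Empty) => e.elim⟩

/-- Node strategy profile `⟨⟨p, c, s_d, s_r⟩⟩` (`true` child = down, `false` child = right). -/
def snode (p : Agent) (c : Choice) (sd sr : StratProf) : StratProf :=
  PFunctor.M.mk ⟨Sum.inr (p, c), fun (b : Bool) => if b then sd else sr⟩

/-- Convergence `↓s`: the least predicate closed under the given rules. -/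
inductive Conv : StratProf → Prop
  | leaf (f : Payoffs) : Conv (sleaf f)
  | down (p : Agent) (sd sr : StratProf) : Conv sd → Conv (snode p Choice.d sd sr)
  | right (p : Agent) (sd sr : StratProf) : Conv sr → Conv (snode p Choice.r sd sr)

/-- One step of the strong-convergence condition. -/
def SConvStep (R : StratProf → Prop) (s : StratProf) : Prop :=
  (∃ f, s = sleaf f) ∨
    ∃ p c sd sr, s = snode p c sd sr ∧ Conv s ∧ R sd ∧ R sr

/-- Strong convergence `⇓s`: the largest predicate `R` with `R ≤ SConvStep R`. -/
def SConv (s : StratProf) : Prop :=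
  ∃ R : StratProf → Prop, R s ∧ ∀ t, R t → SConvStep R t

/-- One step of the `□Φ` condition. -/
def BoxStep (Φ : StratProf → Prop) (R : StratProf → Prop) (t : StratProf) : Prop :=
  Φ t ∧ ∀ p c sd sr, t = snode p c sd sr → R sd ∧ R sr

/-- The modality `□Φ`: the largest predicate `R` with `R ≤ BoxStep Φ R`. -/
def Box (Φ : StratProf → Prop) (s : StratProf) : Prop :=
  ∃ R : StratProf → Prop, R s ∧ ∀ t, R t → BoxStep Φ R t

/-- The partial payoff function `ŝ`, as an inductively defined graph relation:
`PayoffRel s f` means "`ŝ` is defined and equals `f`". -/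
inductive PayoffRel : StratProf → Payoffs → Prop
  | leaf (f : Payoffs) : PayoffRel (sleaf f) f
  | down (p : Agent) (sd sr : StratProf) (f : Payoffs) :
      PayoffRel sd f → PayoffRel (snode p Choice.d sd sr) f
  | right (p : Agent) (sd sr : StratProf) (f : Payoffs) :
      PayoffRel sr f → PayoffRel (snode p Choice.r sd sr) f

/-- Bisimilarity `s' ~ s`: the largest relation satisfying the coinductive clauses. -/
def Bisim (s' s : StratProf) : Prop :=
  ∃ R : StratProf → StratProf → Prop, R s' s ∧
    ∀ t' t, R t' t →
      ((∃ f, t' = sleaf f ∧ t = sleaf f) ∨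
        ∃ p c td' tr' td tr,
          t' = snode p c td' tr' ∧ t = snode p c td tr ∧ R td' td ∧ R tr' tr)

/-- The subprofile relation `s' ≼ s`: the least relation closed under the given rules. -/
inductive Subprof : StratProf → StratProf → Prop
  | bisim {s' s : StratProf} : Bisim s' s → Subprof s' s
  | down {s' : StratProf} {p : Agent} {c : Choice} {sd sr : StratProf} :
      Subprof s' sd → Subprof s' (snode p c sd sr)
  | right {s' : StratProf} {p : Agent} {c : Choice} {sd sr : StratProf} :
      Subprof s' sr → Subprof s' (snode p c sd sr)

/-! ### Games: final coalgebra of `X ↦ ℝ^P + P × X × X` -/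

def GameF : PFunctor.{0} :=
  ⟨Payoffs ⊕ Agent, fun x =>
    match x with
    | Sum.inl _ => Empty
    | Sum.inr _ => Bool⟩

/-- Games: the final coalgebra (M-type) of `GameF`. -/
abbrev Game : Type := GameF.M

/-- Leaf game `⟨f⟩`. -/
def gleaf (f : Payoffs) : Game :=
  PFunctor.M.mk ⟨Sum.inl f, fun (e : Empty) => e.elim⟩

/-- Node game `⟨p, g_d, g_r⟩`. -/
def gnode (p : Agent) (gd gr : Game) : Game :=
  PFunctor.M.mk ⟨Sum.inr p, fun (b : Bool) => if b then gd else gr⟩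

/-- The corecursive function `game : StratProf → Game` erasing the choices. -/
def gameOf : StratProf → Game :=
  PFunctor.M.corec (fun s =>
    match PFunctor.M.dest s with
    | ⟨Sum.inl f, _⟩ => ⟨Sum.inl f, fun (e : Empty) => e.elim⟩
    | ⟨Sum.inr pc, k⟩ => ⟨Sum.inr pc.1, k⟩)

/-! ### Strategies: final coalgebra of `X ↦ ℝ^P + (P + Choice) × X × X` -/

def StratF : PFunctor.{0} :=
  ⟨Payoffs ⊕ (Agent ⊕ Choice), fun x =>
    match x with
    | Sum.inl _ => Empty
    | Sum.inr _ => Bool⟩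

/-- Strategies: the final coalgebra (M-type) of `StratF`. -/
abbrev Strat : Type := StratF.M

/-- Leaf strategy `⟨f⟩`. -/
def stleaf (f : Payoffs) : Strat :=
  PFunctor.M.mk ⟨Sum.inl f, fun (e : Empty) => e.elim⟩

/-- Node strategy `⟨x, st₁, st₂⟩` with `x` an agent or a choice. -/
def stnode (x : Agent ⊕ Choice) (s1 s2 : Strat) : Strat :=
  PFunctor.M.mk ⟨Sum.inr x, fun (b : Bool) => if b then s1 else s2⟩

/-- The corecursive function `st2g` replacing choice labels by the given agent. -/
def st2gStep (p : Agent) (t : Strat) : GameF.Obj Strat :=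
  match PFunctor.M.dest t with
  | ⟨Sum.inl f, _⟩ => ⟨Sum.inl f, fun (e : Empty) => e.elim⟩
  | ⟨Sum.inr (Sum.inl q), k⟩ => ⟨Sum.inr q, k⟩
  | ⟨Sum.inr (Sum.inr _), k⟩ => ⟨Sum.inr p, k⟩

/-- The corecursive function `st2g` replacing choice labels by the given agent. -/
def st2g (st : Strat) (p : Agent) : Game :=
  PFunctor.M.corec (st2gStep p) st

/-- `st` is full for `p`: coinductively, the agent `p` occurs nowhere as a label. -/
def Full (p : Agent) (st : Strat) : Prop :=
  ∃ R : Strat → Prop, R st ∧ ∀ t, R t →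
    (∃ f, t = stleaf f) ∨
      ∃ x s1 s2, t = stnode x s1 s2 ∧ x ≠ Sum.inl p ∧ R s1 ∧ R s2

/-- A one-level view of a strategy. -/
inductive StratView : Type
  | leaf (f : Payoffs)
  | node (x : Agent ⊕ Choice) (k : Bool → Strat)

/-- Destruct a strategy into its one-level view. -/
def stratView (t : Strat) : StratView :=
  match PFunctor.M.dest t with
  | ⟨Sum.inl f, _⟩ => StratView.leaf f
  | ⟨Sum.inr x, k⟩ => StratView.node x k

/-- One corecursion step for the sum of the strategy of `A` (first component)
and the strategy of `B` (second component). -/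
def oplusStep : Strat × Strat → StratProfF.Obj (Strat × Strat) := fun q =>
  match stratView q.1, stratView q.2 with
  | StratView.leaf f, _ => ⟨Sum.inl f, fun (e : Empty) => e.elim⟩
  | StratView.node _ _, StratView.leaf f => ⟨Sum.inl f, fun (e : Empty) => e.elim⟩
  | StratView.node (Sum.inr c) k1, StratView.node (Sum.inl p') k2 =>
      ⟨Sum.inr (p', c), fun (b : Bool) => (k1 b, k2 b)⟩
  | StratView.node (Sum.inr c) k1, StratView.node (Sum.inr _) k2 =>
      ⟨Sum.inr (Agent.A, c), fun (b : Bool) => (k1 b, k2 b)⟩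
  | StratView.node (Sum.inl p') k1, StratView.node (Sum.inr c) k2 =>
      ⟨Sum.inr (p', c), fun (b : Bool) => (k1 b, k2 b)⟩
  | StratView.node (Sum.inl p') k1, StratView.node (Sum.inl _) k2 =>
      ⟨Sum.inr (p', Choice.d), fun (b : Bool) => (k1 b, k2 b)⟩

/-- The sum `st_A ⊕ st_B` of the strategies of the two agents. -/
def oplus (stA stB : Strat) : StratProf :=
  PFunctor.M.corec oplusStep (stA, stB)

/-! ### Equilibria -/

/-- The local equilibrium condition `PE`. -/
def PE (s : StratProf) : Prop :=
  SConv s ∧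
    (∀ p sd sr fd fr, s = snode p Choice.d sd sr →
        PayoffRel sd fd → PayoffRel sr fr → fd p ≥ fr p) ∧
    (∀ p sd sr fd fr, s = snode p Choice.r sd sr →
        PayoffRel sd fd → PayoffRel sr fr → fr p ≥ fd p)

/-- Subgame perfect equilibrium: `SPE = □PE`. -/
def SPE : StratProf → Prop := Box PE

/-- Convertibility `s ⊢p⊣ s'`: the inductively defined deviation relation of agent `p`. -/
inductive Convert (p : Agent) : StratProf → StratProf → Prop
  | bisim {s s' : StratProf} : Bisim s s' → Convert p s s'
  | own {c c' : Choice} {s1 s2 s1' s2' : StratProf} :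
      Convert p s1 s1' → Convert p s2 s2' →
      Convert p (snode p c s1 s2) (snode p c' s1' s2')
  | other {p' : Agent} {c : Choice} {s1 s2 s1' s2' : StratProf} :
      Convert p s1 s1' → Convert p s2 s2' →
      Convert p (snode p' c s1 s2) (snode p' c s1' s2')

/-- Nash equilibrium: no agent can improve her payoff by converting
(the inequality being required whenever both payoffs are defined). -/
def Nash (s : StratProf) : Prop :=
  ∀ p s' f f', Convert p s s' → PayoffRel s f → PayoffRel s' f' → f p ≥ f' p

/-! ### The 0,1-game -/

/-- The payoff function `A ↦ 0, B ↦ 1`. -/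
def f01 : Payoffs := fun p => match p with | Agent.A => 0 | Agent.B => 1

/-- The payoff function `A ↦ 1, B ↦ 0`. -/
def f10 : Payoffs := fun p => match p with | Agent.A => 1 | Agent.B => 0

/-- `S01 true = S0` and `S01 false = S1`: the largest pair of predicates
characterizing the strategy profiles of the 0,1-game. -/
def S01 (i : Bool) (s : StratProf) : Prop :=
  ∃ R : Bool → StratProf → Prop, R i s ∧
    (∀ t, R true t → ∃ c s', t = snode Agent.A c (sleaf f01) s' ∧ R false s') ∧
    (∀ t, R false t → ∃ c s', t = snode Agent.B c (sleaf f10) s' ∧ R true s')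

def S0 : StratProf → Prop := S01 true
def S1 : StratProf → Prop := S01 false

/-- One step of the `AcBes` condition. -/
def AcBesStep (R : StratProf → Prop) (s : StratProf) : Prop :=
  ∀ p c f s', s = snode p c (sleaf f) s' →
    (p = Agent.A ∧ f = f01 ∧ c = Choice.r ∧ R s') ∨
    (p = Agent.B ∧ f = f10 ∧ (c = Choice.d ∨ R s'))

/-- `AcBes`: "A continues and B eventually stops", the least predicate `R`
such that `AcBesStep R ≤ R` (impredicative encoding of the least fixed point). -/
def AcBes (s : StratProf) : Prop :=
  ∀ R : StratProf → Prop, (∀ t, AcBesStep R t → R t) → R s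

/-- One step of the `BcAes` condition. -/
def BcAesStep (R : StratProf → Prop) (s : StratProf) : Prop :=
  ∀ p c f s', s = snode p c (sleaf f) s' →
    (p = Agent.B ∧ f = f10 ∧ c = Choice.r ∧ R s') ∨
    (p = Agent.A ∧ f = f01 ∧ (c = Choice.d ∨ R s'))

/-- `BcAes`: "B continues and A eventually stops", symmetric to `AcBes`. -/
def BcAes (s : StratProf) : Prop :=
  ∀ R : StratProf → Prop, (∀ t, BcAesStep R t → R t) → R s

def SAcBes : StratProf → Prop := Box AcBes
def SBcAes : StratProf → Prop := Box BcAes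

/-! ### The 0,1-game `g01`, the escalation strategies and the all-continue profile -/

/-- Corecursion step for `g01` and `g10`:
`inl true ↦ g01`, `inl false ↦ g10`, `inr true ↦ ⟨f01⟩`, `inr false ↦ ⟨f10⟩`. -/
def g01Step : Bool ⊕ Bool → GameF.Obj (Bool ⊕ Bool)
  | Sum.inl true => ⟨Sum.inr Agent.A, fun (b : Bool) => if b then Sum.inr true else Sum.inl false⟩
  | Sum.inl false => ⟨Sum.inr Agent.B, fun (b : Bool) => if b then Sum.inr false else Sum.inl true⟩
  | Sum.inr true => ⟨Sum.inl f01, fun (e : Empty) => e.elim⟩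
  | Sum.inr false => ⟨Sum.inl f10, fun (e : Empty) => e.elim⟩

/-- The 0,1-game: `g01 = ⟨A, ⟨f01⟩, g10⟩` where `g10 = ⟨B, ⟨f10⟩, g01⟩`. -/
def g01 : Game := PFunctor.M.corec g01Step (Sum.inl true)

/-- `g10 = ⟨B, ⟨f10⟩, g01⟩`. -/
def g10 : Game := PFunctor.M.corec g01Step (Sum.inl false)

/-- Corecursion step for `st_{A,∞} = ⟨r, ⟨f01⟩, ⟨B, ⟨f10⟩, st_{A,∞}⟩⟩`. -/
def stAinfStep : ℕ → StratF.Obj ℕ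
  | 0 => ⟨Sum.inr (Sum.inr Choice.r), fun (b : Bool) => if b then 2 else 1⟩
  | 1 => ⟨Sum.inr (Sum.inl Agent.B), fun (b : Bool) => if b then 3 else 0⟩
  | 2 => ⟨Sum.inl f01, fun (e : Empty) => e.elim⟩
  | _ => ⟨Sum.inl f10, fun (e : Empty) => e.elim⟩

/-- The escalation strategy of `A`: `st_{A,∞} = ⟨r, ⟨f01⟩, ⟨B, ⟨f10⟩, st_{A,∞}⟩⟩`. -/
def stAinf : Strat := PFunctor.M.corec stAinfStep 0

/-- Corecursion step for `st_{B,∞} = ⟨A, ⟨f01⟩, ⟨r, ⟨f10⟩, st_{B,∞}⟩⟩`. -/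
def stBinfStep : ℕ → StratF.Obj ℕ
  | 0 => ⟨Sum.inr (Sum.inl Agent.A), fun (b : Bool) => if b then 2 else 1⟩
  | 1 => ⟨Sum.inr (Sum.inr Choice.r), fun (b : Bool) => if b then 3 else 0⟩
  | 2 => ⟨Sum.inl f01, fun (e : Empty) => e.elim⟩
  | _ => ⟨Sum.inl f10, fun (e : Empty) => e.elim⟩

/-- The escalation strategy of `B`: `st_{B,∞} = ⟨A, ⟨f01⟩, ⟨r, ⟨f10⟩, st_{B,∞}⟩⟩`. -/
def stBinf : Strat := PFunctor.M.corec stBinfStep 0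

/-- Corecursion step for the all-continue profile
`s_{A,∞} = ⟨⟨A, r, ⟨⟨f01⟩⟩, s_{B,∞}⟩⟩`, `s_{B,∞} = ⟨⟨B, r, ⟨⟨f10⟩⟩, s_{A,∞}⟩⟩`. -/
def sAinfStep : ℕ → StratProfF.Obj ℕ
  | 0 => ⟨Sum.inr (Agent.A, Choice.r), fun (b : Bool) => if b then 2 else 1⟩
  | 1 => ⟨Sum.inr (Agent.B, Choice.r), fun (b : Bool) => if b then 3 else 0⟩
  | 2 => ⟨Sum.inl f01, fun (e : Empty) => e.elim⟩
  | _ => ⟨Sum.inl f10, fun (e : Empty) => e.elim⟩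

/-- The all-continue profile `s_{A,∞}` of the 0,1-game. -/
def sAinf : StratProf := PFunctor.M.corec sAinfStep 0

/-- The profile `s_{B,∞}`. -/
def sBinf : StratProf := PFunctor.M.corec sAinfStep 1

/-- `s_□r`, the profile of the 0,1-game where both agents continue forever
(it satisfies `s_□r = ⟨⟨A, r, ⟨⟨f01⟩⟩, ⟨⟨B, r, ⟨⟨f10⟩⟩, s_□r⟩⟩⟩⟩`). -/
def sBoxr : StratProf := sAinf

/-- `s_{d□r} = ⟨⟨A, d, ⟨⟨f01⟩⟩, ⟨⟨B, r, ⟨⟨f10⟩⟩, s_□r⟩⟩⟩⟩`. -/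
def sdBoxr : StratProf :=
  snode Agent.A Choice.d (sleaf f01) (snode Agent.B Choice.r (sleaf f10) sBoxr)

/-! ### Finite games and profiles -/

/-- Finite strategy profiles. -/
inductive FinStratProf : Type
  | leaf (f : Payoffs)
  | node (p : Agent) (c : Choice) (sd sr : FinStratProf)

/-- Finite games. -/
inductive FinGame : Type
  | leaf (f : Payoffs)
  | node (p : Agent) (gd gr : FinGame)

/-- The (total) payoff function of a finite strategy profile. -/
def fpayoff : FinStratProf → Payoffs
  | FinStratProf.leaf f => f
  | FinStratProf.node _ Choice.d sd _ => fpayoff sd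
  | FinStratProf.node _ Choice.r _ sr => fpayoff sr

/-- The game of a finite strategy profile (erasing the choices). -/
def fgame : FinStratProf → FinGame
  | FinStratProf.leaf f => FinGame.leaf f
  | FinStratProf.node p _ sd sr => FinGame.node p (fgame sd) (fgame sr)

/-- Backward induction for finite strategy profiles. -/
inductive BI : FinStratProf → Prop
  | leaf (f : Payoffs) : BI (FinStratProf.leaf f)
  | node (p : Agent) (c : Choice) (sd sr : FinStratProf) :
      BI sd → BI sr →
      (c = Choice.d → fpayoff sd p ≥ fpayoff sr p) →
      (c = Choice.r → fpayoff sr p ≥ fpayoff sd p) →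
      BI (FinStratProf.node p c sd sr)

/-- The family `F01` of finite truncations of the 0,1-game (cut after `B`). -/
inductive F01 : FinGame → Prop
  | base : F01 (FinGame.leaf f01)
  | step (g : FinGame) : F01 g →
      F01 (FinGame.node Agent.A (FinGame.leaf f01) (FinGame.node Agent.B (FinGame.leaf f10) g))

/-- `SF01`: agent B always continues, agent A does whatever she likes. -/
inductive SF01 : FinStratProf → Prop
  | base : SF01 (FinStratProf.leaf f01)
  | step (c : Choice) (s' : FinStratProf) : SF01 s' →
      SF01 (FinStratProf.node Agent.A c (FinStratProf.leaf f01)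
        (FinStratProf.node Agent.B Choice.r (FinStratProf.leaf f10) s'))

mutual
  /-- The family `K01` of finite truncations of the 0,1-game (cut after `A`). -/
  inductive K01 : FinGame → Prop
    | step (g : FinGame) : K01' g → K01 (FinGame.node Agent.A (FinGame.leaf f01) g)
  /-- The auxiliary family `K01'`. -/
  inductive K01' : FinGame → Prop
    | base : K01' (FinGame.leaf f10)
    | step (g : FinGame) : K01 g → K01' (FinGame.node Agent.B (FinGame.leaf f10) g)
end

mutual
  /-- `SK01`: agent A always continues, agent B does whatever she likes. -/
  inductive SK01 : FinStratProf → Prop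
    | step (s' : FinStratProf) : SK01' s' →
        SK01 (FinStratProf.node Agent.A Choice.r (FinStratProf.leaf f01) s')
  /-- The auxiliary predicate `SK01'`. -/
  inductive SK01' : FinStratProf → Prop
    | base : SK01' (FinStratProf.leaf f10)
    | step (c : Choice) (s' : FinStratProf) : SK01 s' →
        SK01' (FinStratProf.node Agent.B c (FinStratProf.leaf f10) s')
end

/-! ### Auxiliary lemmas -/

lemma aux_sleaf_ne_snode (f : Payoffs) (p : Agent) (c : Choice) (sd sr : StratProf) :
    sleaf f ≠ snode p c sd sr := by
  intro h
  have h1 := congrArg (fun t => (PFunctor.M.dest t).1) h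
  simp only [sleaf, snode, PFunctor.M.dest_mk] at h1
  have h2 : (Sum.inl f : Payoffs ⊕ (Agent × Choice)) = Sum.inr (p, c) := h1
  exact Sum.inl_ne_inr h2

lemma aux_sleaf_inj {f g : Payoffs} (h : sleaf f = sleaf g) : f = g := by
  have h1 := congrArg (fun t => (PFunctor.M.dest t).1) h
  simp only [sleaf, PFunctor.M.dest_mk] at h1
  injection h1

lemma aux_snode_inj {p p' : Agent} {c c' : Choice} {sd sr sd' sr' : StratProf}
    (h : snode p c sd sr = snode p' c' sd' sr') :
    p = p' ∧ c = c' ∧ sd = sd' ∧ sr = sr' := by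
  have h1 := congrArg PFunctor.M.dest h
  simp only [snode, PFunctor.M.dest_mk] at h1
  injection h1 with hfst hsnd
  injection hfst with h2
  obtain ⟨hp, hc⟩ : p = p' ∧ c = c' := ⟨congrArg Prod.fst h2, congrArg Prod.snd h2⟩
  subst hp; subst hc
  refine ⟨rfl, rfl, ?_, ?_⟩
  · exact congrFun hsnd true
  · exact congrFun hsnd false

lemma aux_S0_dest {s : StratProf} (h : S0 s) :
    ∃ c s', s = snode Agent.A c (sleaf f01) s' ∧ S1 s' := by
  obtain ⟨R, hR, h0, h1⟩ := h
  obtain ⟨c, s', heq, hs'⟩ := h0 s hR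
  exact ⟨c, s', heq, R, hs', h0, h1⟩

lemma aux_S1_dest {s : StratProf} (h : S1 s) :
    ∃ c s', s = snode Agent.B c (sleaf f10) s' ∧ S0 s' := by
  obtain ⟨R, hR, h0, h1⟩ := h
  obtain ⟨c, s', heq, hs'⟩ := h1 s hR
  exact ⟨c, s', heq, R, hs', h0, h1⟩

lemma aux_box_self {Φ : StratProf → Prop} {s : StratProf} (h : Box Φ s) : Φ s := by
  obtain ⟨R, hR, hstep⟩ := h
  exact (hstep s hR).1

lemma aux_box_child {Φ : StratProf → Prop} {p c sd sr} (h : Box Φ (snode p c sd sr)) :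
    Box Φ sd ∧ Box Φ sr := by
  obtain ⟨R, hR, hstep⟩ := h
  obtain ⟨hd, hr⟩ := (hstep _ hR).2 p c sd sr rfl
  exact ⟨⟨R, hd, hstep⟩, ⟨R, hr, hstep⟩⟩

lemma aux_bcaes_dest {s : StratProf} (h : BcAes s) : BcAesStep BcAes s := by
  refine h (BcAesStep BcAes) ?_
  intro t ht p c f s' heq
  rcases ht p c f s' heq with ⟨hp, hf, hc, hR⟩ | ⟨hp, hf, hcr⟩
  · refine Or.inl ⟨hp, hf, hc, ?_⟩
    intro R hR'
    exact hR' s' (fun q cq fq sq hq => by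
      rcases hR q cq fq sq hq with ⟨a, b, c1, d⟩ | ⟨a, b, c1⟩
      · exact Or.inl ⟨a, b, c1, d R hR'⟩
      · exact Or.inr ⟨a, b, c1.imp id (fun hh => hh R hR')⟩)
  · refine Or.inr ⟨hp, hf, ?_⟩
    rcases hcr with hd | hR
    · exact Or.inl hd
    · refine Or.inr ?_
      intro R hR'
      exact hR' s' (fun q cq fq sq hq => by
        rcases hR q cq fq sq hq with ⟨a, b, c1, d⟩ | ⟨a, b, c1⟩
        · exact Or.inl ⟨a, b, c1, d R hR'⟩
        · exact Or.inr ⟨a, b, c1.imp id (fun hh => hh R hR')⟩)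

/-- For 0,1-game profiles, `BcAes` implies convergence. -/
lemma aux_conv_of_bcaes {s : StratProf} (h : BcAes s) (h01 : S0 s ∨ S1 s) : Conv s := by
  refine h (fun t => (S0 t ∨ S1 t) → Conv t) ?_ h01
  intro t ht h01t
  rcases h01t with h0 | h1
  · obtain ⟨c, s', heq, hs'⟩ := aux_S0_dest h0
    rcases ht Agent.A c f01 s' heq with ⟨hp, _, _, _⟩ | ⟨_, _, hc⟩
    · exact absurd hp (by simp)
    · cases c with
      | d => exact heq ▸ Conv.down _ _ _ (Conv.leaf _)
      | r =>
        rcases hc with hd | hR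
        · exact absurd hd (by simp)
        · exact heq ▸ Conv.right _ _ _ (hR (Or.inr hs'))
  · obtain ⟨c, s', heq, hs'⟩ := aux_S1_dest h1
    rcases ht Agent.B c f10 s' heq with ⟨_, _, hc, hR⟩ | ⟨hp, _, _⟩
    · exact heq ▸ hc ▸ Conv.right _ _ _ (hR (Or.inl hs'))
    · exact absurd hp (by simp)

/-- For 0,1-game profiles, `BcAes` implies the payoff is `f01`. -/
lemma aux_payoff_of_bcaes {s : StratProf} (h : BcAes s) (h01 : S0 s ∨ S1 s) :
    PayoffRel s f01 := by
  refine h (fun t => (S0 t ∨ S1 t) → PayoffRel t f01) ?_ h01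
  intro t ht h01t
  rcases h01t with h0 | h1
  · obtain ⟨c, s', heq, hs'⟩ := aux_S0_dest h0
    rcases ht Agent.A c f01 s' heq with ⟨hp, _, _, _⟩ | ⟨_, _, hc⟩
    · exact absurd hp (by simp)
    · cases c with
      | d => exact heq ▸ PayoffRel.down _ _ _ _ (PayoffRel.leaf _)
      | r =>
        rcases hc with hd | hR
        · exact absurd hd (by simp)
        · exact heq ▸ PayoffRel.right _ _ _ _ (hR (Or.inr hs'))
  · obtain ⟨c, s', heq, hs'⟩ := aux_S1_dest h1
    rcases ht Agent.B c f10 s' heq with ⟨_, _, hc, hR⟩ | ⟨hp, _, _⟩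
    · exact heq ▸ hc ▸ PayoffRel.right _ _ _ _ (hR (Or.inl hs'))
    · exact absurd hp (by simp)

lemma aux_payoff_inv {s : StratProf} {f : Payoffs} (h : PayoffRel s f) :
    (∃ g, s = sleaf g ∧ f = g) ∨
    (∃ p sd sr, s = snode p Choice.d sd sr ∧ PayoffRel sd f) ∨
    (∃ p sd sr, s = snode p Choice.r sd sr ∧ PayoffRel sr f) := by
  cases h with
  | leaf => exact Or.inl ⟨_, rfl, rfl⟩
  | down p sd sr f' h' => exact Or.inr (Or.inl ⟨p, sd, sr, rfl, h'⟩)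
  | right p sd sr f' h' => exact Or.inr (Or.inr ⟨p, sd, sr, rfl, h'⟩)

lemma aux_payoff_det {s : StratProf} {f g : Payoffs}
    (h1 : PayoffRel s f) (h2 : PayoffRel s g) : f = g := by
  have H : ∀ g', PayoffRel s g' → f = g' := by
    clear h2
    induction h1 with
    | leaf f =>
      intro g h2
      rcases aux_payoff_inv h2 with ⟨g', hg, hfg⟩ | ⟨p, sd, sr, hg, _⟩ | ⟨p, sd, sr, hg, _⟩
      · exact hfg ▸ aux_sleaf_inj hg
      · exact absurd hg (aux_sleaf_ne_snode _ _ _ _ _)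
      · exact absurd hg (aux_sleaf_ne_snode _ _ _ _ _)
    | down p sd sr f h' ih =>
      intro g h2
      rcases aux_payoff_inv h2 with ⟨g', hg, _⟩ | ⟨p', sd', sr', hg, hrel⟩ |
        ⟨p', sd', sr', hg, hrel⟩
      · exact absurd hg.symm (aux_sleaf_ne_snode _ _ _ _ _)
      · obtain ⟨_, _, hd, _⟩ := aux_snode_inj hg
        exact ih g (hd ▸ hrel)
      · obtain ⟨_, hc, _, _⟩ := aux_snode_inj hg
        exact Choice.noConfusion hc
    | right p sd sr f h' ih =>
      intro g h2
      rcases aux_payoff_inv h2 with ⟨g', hg, _⟩ | ⟨p', sd', sr', hg, hrel⟩ |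
        ⟨p', sd', sr', hg, hrel⟩
      · exact absurd hg.symm (aux_sleaf_ne_snode _ _ _ _ _)
      · obtain ⟨_, hc, _, _⟩ := aux_snode_inj hg
        exact Choice.noConfusion hc
      · obtain ⟨_, _, _, hr⟩ := aux_snode_inj hg
        exact ih g (hr ▸ hrel)
  exact H g h2

/-- The invariant used for the final coinduction. -/
def AuxInv (t : StratProf) : Prop :=
  (∃ f, t = sleaf f) ∨ ((S0 t ∨ S1 t) ∧ SBcAes t)

lemma aux_sconv {s : StratProf} (h : AuxInv s) : SConv s := by
  refine ⟨AuxInv, h, ?_⟩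
  intro t ht
  rcases ht with ⟨f, hf⟩ | ⟨h01, hbox⟩
  · exact Or.inl ⟨f, hf⟩
  · have hbc : BcAes t := aux_box_self hbox
    have hconv : Conv t := aux_conv_of_bcaes hbc h01
    rcases h01 with h0 | h1
    · obtain ⟨c, s', heq, hs'⟩ := aux_S0_dest h0
      obtain ⟨hd, hr⟩ := aux_box_child (heq ▸ hbox)
      exact Or.inr ⟨_, _, _, _, heq, hconv, Or.inl ⟨f01, rfl⟩, Or.inr ⟨Or.inr hs', hr⟩⟩
    · obtain ⟨c, s', heq, hs'⟩ := aux_S1_dest h1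
      obtain ⟨hd, hr⟩ := aux_box_child (heq ▸ hbox)
      exact Or.inr ⟨_, _, _, _, heq, hconv, Or.inl ⟨f10, rfl⟩, Or.inr ⟨Or.inl hs', hr⟩⟩

lemma aux_pe {s : StratProf} (h : AuxInv s) : PE s := by
  refine ⟨aux_sconv h, ?_, ?_⟩
  · -- down case
    intro p sd sr fd fr heq hfd hfr
    rcases h with ⟨f, hf⟩ | ⟨h01, hbox⟩
    · exact absurd (hf ▸ heq) (aux_sleaf_ne_snode _ _ _ _ _)
    · have hbc : BcAes s := aux_box_self hbox
      rcases h01 with h0 | h1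
      · obtain ⟨c, s', heq', hs'⟩ := aux_S0_dest h0
        obtain ⟨hp, hc, hd, hr⟩ := aux_snode_inj (heq.symm.trans heq')
        -- sd = sleaf f01, sr has payoff f01
        have hbcr : BcAes sr := aux_box_self (aux_box_child (heq ▸ hbox)).2
        have hfd' : fd = f01 := aux_payoff_det hfd (hd ▸ PayoffRel.leaf f01)
        have hfr' : fr = f01 := aux_payoff_det hfr (aux_payoff_of_bcaes hbcr (Or.inr (hr ▸ hs')))
        rw [hfd', hfr']
      · obtain ⟨c, s', heq', hs'⟩ := aux_S1_dest h1
        obtain ⟨hp, hc, hd, hr⟩ := aux_snode_inj (heq.symm.trans heq')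
        -- BcAes at a B node forces c = r, contradiction with Choice.d
        rcases aux_bcaes_dest hbc Agent.B c f10 s' heq' with ⟨_, _, hcr, _⟩ | ⟨hpA, _, _⟩
        · exact Choice.noConfusion (hc.trans hcr)
        · exact Agent.noConfusion hpA
  · -- right case
    intro p sd sr fd fr heq hfd hfr
    rcases h with ⟨f, hf⟩ | ⟨h01, hbox⟩
    · exact absurd (hf ▸ heq) (aux_sleaf_ne_snode _ _ _ _ _)
    · have hbc : BcAes s := aux_box_self hbox
      rcases h01 with h0 | h1
      · obtain ⟨c, s', heq', hs'⟩ := aux_S0_dest h0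
        obtain ⟨hp, hc, hd, hr⟩ := aux_snode_inj (heq.symm.trans heq')
        have hbcr : BcAes sr := aux_box_self (aux_box_child (heq ▸ hbox)).2
        have hfd' : fd = f01 := aux_payoff_det hfd (hd ▸ PayoffRel.leaf f01)
        have hfr' : fr = f01 := aux_payoff_det hfr (aux_payoff_of_bcaes hbcr (Or.inr (hr ▸ hs')))
        rw [hfd', hfr']
      · obtain ⟨c, s', heq', hs'⟩ := aux_S1_dest h1
        obtain ⟨hp, hc, hd, hr⟩ := aux_snode_inj (heq.symm.trans heq')
        have hbcr : BcAes sr := aux_box_self (aux_box_child (heq ▸ hbox)).2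
        have hfd' : fd = f10 := aux_payoff_det hfd (hd ▸ PayoffRel.leaf f10)
        have hfr' : fr = f01 := aux_payoff_det hfr (aux_payoff_of_bcaes hbcr (Or.inl (hr ▸ hs')))
        rw [hfd', hfr', hp]
        simp [f01, f10]

/-- for profiles of the 0,1-game, `SBcAes s` implies `SPE s`. -/
theorem spe_of_sbcaes : ∀ s : StratProf, (S0 s ∨ S1 s) → SBcAes s → SPE s := by
  intro s h01 hbox
  refine ⟨AuxInv, Or.inr ⟨h01, hbox⟩, ?_⟩
  intro t ht
  refine ⟨aux_pe ht, ?_⟩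
  intro p c sd sr heq
  rcases ht with ⟨f, hf⟩ | ⟨h01t, hboxt⟩
  · exact absurd (hf ▸ heq) (aux_sleaf_ne_snode _ _ _ _ _)
  · obtain ⟨hboxd, hboxr⟩ := aux_box_child (heq ▸ hboxt)
    rcases h01t with h0 | h1
    · obtain ⟨c', s', heq', hs'⟩ := aux_S0_dest h0
      obtain ⟨hp, hc, hd, hr⟩ := aux_snode_inj (heq.symm.trans heq')
      exact ⟨Or.inl ⟨f01, hd⟩, Or.inr ⟨Or.inr (hr ▸ hs'), hboxr⟩⟩
    · obtain ⟨c', s', heq', hs'⟩ := aux_S1_dest h1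
      obtain ⟨hp, hc, hd, hr⟩ := aux_snode_inj (heq.symm.trans heq')
      exact ⟨Or.inl ⟨f10, hd⟩, Or.inr ⟨Or.inl (hr ▸ hs'), hboxr⟩⟩
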